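/- Let V₁ and V₂ be finite-dimensional real vector spaces and g ⊆ gl(V₁ ⊕ V₂) a Lie subalgebra preserving V₁ and V₂ and acting faithfully on each. Then any formal curvature tensor R (an alternating bilinear map (V₁⊕V₂)² → g with the first Bianchi identity) is uniquely determined by its values R(x, y') for x ∈ V₁, y' ∈ V₂, and these values satisfy: R(x,y')z' = R(x,z')y' for all x ∈ V₁, y',z' ∈ V₂, and R(x,y')t = R(t,y')x for all x,t ∈ V₁, y' ∈ V₂. -/

import Mathlib

attribute [local instance 100] LieRing.ofAssociativeRing

theorem stmt_1 (V₁ V₂ : Type*) [AddCommGroup V₁] [Module ℝ V₁]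
    [AddCommGroup V₂] [Module ℝ V₂]
    [FiniteDimensional ℝ V₁] [FiniteDimensional ℝ V₂]
    (g : LieSubalgebra ℝ (Module.End ℝ (V₁ × V₂)))
    (hpres₁ : ∀ A ∈ g, ∀ x : V₁, (A (x, 0)).2 = 0)
    (hpres₂ : ∀ A ∈ g, ∀ y : V₂, (A (0, y)).1 = 0)
    (hfaith₁ : ∀ A ∈ g, (∀ x : V₁, A (x, 0) = 0) → A = 0)
    (hfaith₂ : ∀ A ∈ g, (∀ y : V₂, A (0, y) = 0) → A = 0)
    (R R' : (V₁ × V₂) →ₗ[ℝ] (V₁ × V₂) →ₗ[ℝ] Module.End ℝ (V₁ × V₂))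
    (hval : ∀ a b, R a b ∈ g) (hval' : ∀ a b, R' a b ∈ g)
    (halt : ∀ a b, R a b = - R b a) (halt' : ∀ a b, R' a b = - R' b a)
    (hBianchi : ∀ a b c, R a b c + R b c a + R c a b = 0)
    (hBianchi' : ∀ a b c, R' a b c + R' b c a + R' c a b = 0)
    (hagree : ∀ (x : V₁) (y' : V₂), R (x, 0) (0, y') = R' (x, 0) (0, y')) :
    R = R' ∧
    (∀ (x : V₁) (y' z' : V₂),
      R (x, 0) (0, y') (0, z') = R (x, 0) (0, z') (0, y')) ∧
    (∀ (x t : V₁) (y' : V₂),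
      R (x, 0) (0, y') (t, 0) = R (t, 0) (0, y') (x, 0)) := by
  refine ⟨?_, ?_, ?_⟩
  · -- R = R'
    -- mixed values agree (both orders)
    have hag2 : ∀ (x : V₁) (y' : V₂), R (0, y') (x, 0) = R' (0, y') (x, 0) := by
      intro x y'
      rw [halt, halt', hagree]
    -- values on V₁ × V₁ agree
    have hB : ∀ x t : V₁, R (x, 0) (t, 0) = R' (x, 0) (t, 0) := by
      intro x t
      have hm : R (x, 0) (t, 0) - R' (x, 0) (t, 0) ∈ g :=
        sub_mem (hval _ _) (hval' _ _)
      have := hfaith₂ _ hm ?_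
      · exact sub_eq_zero.mp this
      intro y'
      have h1 := hBianchi (x, 0) (t, 0) (0, y')
      have h2 := hBianchi' (x, 0) (t, 0) (0, y')
      have e1 : R (t, 0) (0, y') (x, 0) = R' (t, 0) (0, y') (x, 0) := by
        rw [hagree]
      have e2 : R (0, y') (x, 0) (t, 0) = R' (0, y') (x, 0) (t, 0) := by
        rw [hag2]
      simp only [LinearMap.sub_apply]
      rw [e1, e2] at h1
      have : R (x, 0) (t, 0) (0, y') = R' (x, 0) (t, 0) (0, y') := by
        exact add_right_cancel (add_right_cancel (h1.trans h2.symm))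
      rw [this, sub_self]
    have hC : ∀ y' z' : V₂, R (0, y') (0, z') = R' (0, y') (0, z') := by
      intro y' z'
      have hm : R (0, y') (0, z') - R' (0, y') (0, z') ∈ g :=
        sub_mem (hval _ _) (hval' _ _)
      have := hfaith₁ _ hm ?_
      · exact sub_eq_zero.mp this
      intro x
      have h1 := hBianchi (0, y') (0, z') (x, 0)
      have h2 := hBianchi' (0, y') (0, z') (x, 0)
      have e1 : R (0, z') (x, 0) (0, y') = R' (0, z') (x, 0) (0, y') := by
        rw [hag2]
      have e2 : R (x, 0) (0, y') (0, z') = R' (x, 0) (0, y') (0, z') := by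
        rw [hagree]
      simp only [LinearMap.sub_apply]
      rw [e1, e2] at h1
      have : R (0, y') (0, z') (x, 0) = R' (0, y') (0, z') (x, 0) := by
        exact add_right_cancel (add_right_cancel (h1.trans h2.symm))
      rw [this, sub_self]
    refine LinearMap.ext fun a => LinearMap.ext fun b => ?_
    have ha : a = (a.1, 0) + (0, a.2) := by simp
    have hb : b = (b.1, 0) + (0, b.2) := by simp
    rw [ha, hb]
    simp only [map_add, LinearMap.add_apply]
    rw [hB, hC, hagree, hag2]
  · -- first symmetry
    intro x y' z'
    have h1 := hBianchi (x, 0) (0, y') (0, z')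
    rw [halt (0, z') (x, 0)] at h1
    have h1' := congrArg Prod.snd h1
    have h2 : (R (0, y') (0, z') (x, 0)).2 = 0 := hpres₁ _ (hval _ _) x
    have h3 : (R (x, 0) (0, y') (0, z')).1 = 0 := hpres₂ _ (hval _ _) z'
    have h4 : (R (x, 0) (0, z') (0, y')).1 = 0 := hpres₂ _ (hval _ _) y'
    simp only [LinearMap.neg_apply, Prod.snd_add, Prod.snd_neg, Prod.snd_zero, h2] at h1'
    refine Prod.ext ?_ ?_
    · rw [h3, h4]
    · have h5 : (R (x, 0) (0, y') (0, z')).2 + -(R (x, 0) (0, z') (0, y')).2 = 0 := by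
        have : (R (x, 0) (0, y') (0, z')).2 + 0 + -(R (x, 0) (0, z') (0, y')).2 = 0 := h1'
        rwa [add_zero] at this
      exact sub_eq_zero.mp (by rw [sub_eq_add_neg]; exact h5)
  · -- second symmetry
    intro x t y'
    have h1 := hBianchi (x, 0) (0, y') (t, 0)
    rw [halt (0, y') (t, 0)] at h1
    have h1' := congrArg Prod.fst h1
    have h2 : (R (t, 0) (x, 0) (0, y')).1 = 0 := hpres₂ _ (hval _ _) y'
    have h3 : (R (x, 0) (0, y') (t, 0)).2 = 0 := hpres₁ _ (hval _ _) t
    have h4 : (R (t, 0) (0, y') (x, 0)).2 = 0 := hpres₁ _ (hval _ _) x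
    simp only [LinearMap.neg_apply, Prod.fst_add, Prod.fst_neg, h2] at h1'
    refine Prod.ext ?_ ?_
    · have h5 : (R (x, 0) (0, y') (t, 0)).1 + -(R (t, 0) (0, y') (x, 0)).1 = 0 := by
        have h6 := h1'
        simp only [Prod.fst_zero, add_zero] at h6
        exact h6
      exact sub_eq_zero.mp (by rw [sub_eq_add_neg]; exact h5)
    · rw [h3, h4]
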